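/- For x ≥ 1/2, the second central moment of K_n* equals K_n*((t−x)²;x) = (1/(n+β)²){β²x² + (n − 2αβ + 2nμ e_μ(−n r_n(x))/e_μ(n r_n(x))) x + α² − (5/12 + μ e_μ(−n r_n(x))/e_μ(n r_n(x)))}. -/

import Mathlib

noncomputable section

/-- θ_k = 0 if k even, 1 if k odd. -/
def theta (k : ℕ) : ℝ := if Even k then 0 else 1

/-- Dunkl coefficients γ_μ(n). -/
def gammaD (mu : ℝ) (n : ℕ) : ℝ :=
  if Even n then
    2 ^ n * (Nat.factorial (n / 2)) * Real.Gamma ((n / 2 : ℕ) + mu + 1 / 2) / Real.Gamma (mu + 1 / 2)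
  else
    2 ^ n * (Nat.factorial (n / 2)) * Real.Gamma ((n / 2 : ℕ) + mu + 3 / 2) / Real.Gamma (mu + 1 / 2)

/-- Dunkl exponential e_μ(x) = Σ xⁿ/γ_μ(n). -/
def eD (mu x : ℝ) : ℝ := ∑' n : ℕ, x ^ n / gammaD mu n

/-- r_n(x) = x - 1/(2n). -/
def rn (n : ℕ) (x : ℝ) : ℝ := x - 1 / (2 * n)

/-- Modified Dunkl Szász–Mirakjan–Kantorovich operator K_n. -/
def Kn (mu : ℝ) (n : ℕ) (f : ℝ → ℝ) (x : ℝ) : ℝ :=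
  (n / eD mu (n * rn n x)) * ∑' k : ℕ, (n * rn n x) ^ k / gammaD mu k *
    ∫ t in (((k : ℝ) + 2 * mu * theta k) / n)..(((k : ℝ) + 1 + 2 * mu * theta k) / n), f t

/-- Stancu-type modified Dunkl Szász–Kantorovich operator K_n^*. -/
def KnStar (mu a b : ℝ) (n : ℕ) (f : ℝ → ℝ) (x : ℝ) : ℝ :=
  (n / eD mu (n * rn n x)) * ∑' k : ℕ, (n * rn n x) ^ k / gammaD mu k *
    ∫ t in (((k : ℝ) + 2 * mu * theta k) / n)..(((k : ℝ) + 1 + 2 * mu * theta k) / n),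
      f ((n * t + a) / (n + b))

/-- Dunkl Szász–Kantorovich–Stancu operator T_n^*. -/
def TnStar (mu a b : ℝ) (n : ℕ) (f : ℝ → ℝ) (x : ℝ) : ℝ :=
  (n / eD mu (n * x)) * ∑' k : ℕ, (n * x) ^ k / gammaD mu k *
    ∫ t in (((k : ℝ) + 2 * mu * theta k) / n)..(((k : ℝ) + 1 + 2 * mu * theta k) / n),
      f ((n * t + a) / (n + b))

/-- Modulus of continuity of f on [0,∞). -/
def modCont (f : ℝ → ℝ) (d : ℝ) : ℝ :=
  sSup {y | ∃ t s : ℝ, 0 ≤ t ∧ 0 ≤ s ∧ |t - s| ≤ d ∧ y = |f t - f s|}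

/-! ### Auxiliary lemmas -/

lemma theta_even' {k : ℕ} (h : Even k) : theta k = 0 := by simp [theta, h]
lemma theta_odd' {k : ℕ} (h : ¬ Even k) : theta k = 1 := by simp [theta, h]

lemma theta_zero' : theta 0 = 0 := theta_even' Even.zero

lemma theta_succ (k : ℕ) : theta (k+1) = 1 - theta k := by
  rcases Nat.even_or_odd k with h | h
  · rw [theta_even' h, theta_odd' (by simp [Nat.even_add_one, h])]; ring
  · rw [theta_odd' (Nat.not_even_iff_odd.mpr h),
      theta_even' (by simp [Nat.even_add_one, Nat.not_even_iff_odd.mpr h])]; ring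

lemma theta_nonneg (k : ℕ) : 0 ≤ theta k := by unfold theta; split <;> norm_num

lemma gammaD_zero (mu : ℝ) (hmu : 0 ≤ mu) : gammaD mu 0 = 1 := by
  have h : Real.Gamma (mu + 1/2) ≠ 0 := ne_of_gt (Real.Gamma_pos_of_pos (by linarith))
  simp only [gammaD, if_pos (Even.zero)]
  norm_num
  exact h

lemma gammaD_succ (mu : ℝ) (hmu : 0 ≤ mu) (k : ℕ) :
    gammaD mu (k+1) = ((k:ℝ) + 1 + 2*mu*theta (k+1)) * gammaD mu k := by
  have hG : Real.Gamma (mu + 1/2) ≠ 0 := ne_of_gt (Real.Gamma_pos_of_pos (by linarith))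
  rcases Nat.even_or_odd k with ⟨m, hm⟩ | ⟨m, hm⟩
  · subst hm
    have he : Even (m + m) := ⟨m, rfl⟩
    have ho : ¬ Even (m + m + 1) := by simp [Nat.even_add_one, he]
    have hd1 : (m + m) / 2 = m := by omega
    have hd2 : (m + m + 1) / 2 = m := by omega
    rw [gammaD, gammaD, if_pos he, if_neg ho, hd1, hd2, theta_odd' ho]
    have key : Real.Gamma ((m:ℝ) + mu + 3/2) = ((m:ℝ) + mu + 1/2) * Real.Gamma ((m:ℝ) + mu + 1/2) := by
      have := Real.Gamma_add_one (s := (m:ℝ) + mu + 1/2) (ne_of_gt (by positivity))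
      rw [show (m:ℝ) + mu + 3/2 = (m:ℝ) + mu + 1/2 + 1 by ring, this]
    rw [key]
    push_cast
    field_simp
    ring
  · subst hm
    have ho : ¬ Even (2*m + 1) := by simp [Nat.even_add_one]
    have he : Even (2*m + 1 + 1) := by refine ⟨m+1, by omega⟩
    have hd1 : (2*m + 1) / 2 = m := by omega
    have hd2 : (2*m + 1 + 1) / 2 = m + 1 := by omega
    rw [gammaD, gammaD, if_neg ho, if_pos he, hd1, hd2, theta_even' he]
    have : ((m:ℝ)+1) + mu + 1/2 = (m:ℝ) + mu + 3/2 := by ring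
    rw [Nat.factorial_succ]
    push_cast [this]
    field_simp
    ring

lemma gammaD_pos (mu : ℝ) (hmu : 0 ≤ mu) (k : ℕ) : 0 < gammaD mu k := by
  induction k with
  | zero => rw [gammaD_zero mu hmu]; norm_num
  | succ k ih =>
    rw [gammaD_succ mu hmu]
    have : 0 ≤ theta (k+1) := theta_nonneg _
    have : (0:ℝ) < (k:ℝ) + 1 + 2*mu*theta (k+1) := by positivity
    exact mul_pos this ih

lemma factorial_le_gammaD (mu : ℝ) (hmu : 0 ≤ mu) (k : ℕ) :
    (Nat.factorial k : ℝ) ≤ gammaD mu k := by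
  induction k with
  | zero => rw [gammaD_zero mu hmu]; simp
  | succ k ih =>
    rw [gammaD_succ mu hmu, Nat.factorial_succ]
    push_cast
    have ht : 0 ≤ theta (k+1) := theta_nonneg _
    have h1 : ((k:ℝ)+1) ≤ (k:ℝ) + 1 + 2*mu*theta (k+1) := by nlinarith
    have := gammaD_pos mu hmu k
    have hf : (0:ℝ) < (Nat.factorial k : ℝ) := by exact_mod_cast Nat.factorial_pos k
    nlinarith

lemma summable_base (mu : ℝ) (hmu : 0 ≤ mu) (z : ℝ) :
    Summable (fun k : ℕ => z ^ k / gammaD mu k) := by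
  apply Summable.of_abs
  apply Summable.of_nonneg_of_le (fun k => abs_nonneg _) _
    (Real.summable_pow_div_factorial |z|)
  intro k
  rw [abs_div, abs_pow, abs_of_pos (gammaD_pos mu hmu k)]
  gcongr
  exact_mod_cast factorial_le_gammaD mu hmu k

lemma shift_tsum {f g : ℕ → ℝ} (hg : Summable g) (h0 : f 0 = 0)
    (hs : ∀ k, f (k+1) = g k) : Summable f ∧ ∑' k, f k = ∑' k, g k := by
  have hfs : (fun k => f (k+1)) = g := funext hs
  have hf : Summable f := (summable_nat_add_iff 1).mp (by rw [hfs]; exact hg)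
  refine ⟨hf, ?_⟩
  rw [Summable.tsum_eq_zero_add hf, h0, hfs, zero_add]

lemma f1_succ (mu : ℝ) (hmu : 0 ≤ mu) (z : ℝ) (k : ℕ) :
    (((k:ℝ)+1) + 2*mu*theta (k+1)) * (z^(k+1) / gammaD mu (k+1))
      = z * (z^k / gammaD mu k) := by
  rw [gammaD_succ mu hmu k, pow_succ]
  have hfac : (0:ℝ) < (k:ℝ) + 1 + 2*mu*theta (k+1) := by
    have := theta_nonneg (k+1); positivity
  have := gammaD_pos mu hmu k
  field_simp

lemma sum1 (mu : ℝ) (hmu : 0 ≤ mu) (z : ℝ) :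
    Summable (fun k : ℕ => ((k:ℝ) + 2*mu*theta k) * (z^k / gammaD mu k)) ∧
    ∑' k : ℕ, ((k:ℝ) + 2*mu*theta k) * (z^k / gammaD mu k) = z * eD mu z := by
  have h := shift_tsum (f := fun k : ℕ => ((k:ℝ) + 2*mu*theta k) * (z^k / gammaD mu k))
    (g := fun k : ℕ => z * (z^k / gammaD mu k))
    ((summable_base mu hmu z).mul_left z)
    (by simp [theta_zero']) (fun k => by exact_mod_cast f1_succ mu hmu z k)
  refine ⟨h.1, ?_⟩
  rw [h.2, tsum_mul_left]; rfl

lemma theta_base_eq (mu z : ℝ) (k : ℕ) :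
    theta k * (z^k / gammaD mu k)
      = (z^k / gammaD mu k) / 2 - ((-z)^k / gammaD mu k) / 2 := by
  rcases Nat.even_or_odd k with h | h
  · rw [theta, if_pos h, h.neg_pow]; ring
  · rw [theta, if_neg (Nat.not_even_iff_odd.mpr h), h.neg_pow]; ring

lemma sumtheta (mu : ℝ) (hmu : 0 ≤ mu) (z : ℝ) :
    Summable (fun k : ℕ => theta k * (z^k / gammaD mu k)) ∧
    ∑' k : ℕ, theta k * (z^k / gammaD mu k) = (eD mu z - eD mu (-z)) / 2 := by
  have h1 := summable_base mu hmu z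
  have h2 := summable_base mu hmu (-z)
  have heq : (fun k : ℕ => theta k * (z^k / gammaD mu k))
      = fun k => (z^k / gammaD mu k) / 2 - ((-z)^k / gammaD mu k) / 2 :=
    funext (theta_base_eq mu z)
  constructor
  · rw [heq]; exact ((h1.div_const 2).sub (h2.div_const 2))
  · rw [heq, Summable.tsum_sub (h1.div_const 2) (h2.div_const 2), tsum_div_const, tsum_div_const]
    unfold eD; ring

lemma sum2 (mu : ℝ) (hmu : 0 ≤ mu) (z : ℝ) :
    Summable (fun k : ℕ => ((k:ℝ) + 2*mu*theta k)^2 * (z^k / gammaD mu k)) ∧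
    ∑' k : ℕ, ((k:ℝ) + 2*mu*theta k)^2 * (z^k / gammaD mu k)
      = z^2 * eD mu z + (1+2*mu) * (z * eD mu z) - 4*mu*z*((eD mu z - eD mu (-z))/2) := by
  have hb := summable_base mu hmu z
  have h1 := sum1 mu hmu z
  have hθ := sumtheta mu hmu z
  have hg : Summable (fun k : ℕ => z * ((((k:ℝ) + 2*mu*theta k) * (z^k / gammaD mu k))
      + (1+2*mu) * (z^k / gammaD mu k) - 4*mu*(theta k * (z^k / gammaD mu k)))) :=
    (((h1.1.add (hb.mul_left (1+2*mu))).sub (hθ.1.mul_left (4*mu))).mul_left z)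
  have h := shift_tsum (f := fun k : ℕ => ((k:ℝ) + 2*mu*theta k)^2 * (z^k / gammaD mu k))
    (g := fun k : ℕ => z * ((((k:ℝ) + 2*mu*theta k) * (z^k / gammaD mu k))
      + (1+2*mu) * (z^k / gammaD mu k) - 4*mu*(theta k * (z^k / gammaD mu k))))
    hg (by simp [theta_zero']) ?_
  · refine ⟨h.1, ?_⟩
    rw [h.2, tsum_mul_left, Summable.tsum_sub (h1.1.add (hb.mul_left (1+2*mu))) (hθ.1.mul_left (4*mu)),
      Summable.tsum_add h1.1 (hb.mul_left (1+2*mu)), tsum_mul_left, tsum_mul_left, h1.2, hθ.2]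
    unfold eD; ring
  · intro k
    have key : (((k:ℝ)+1) + 2*mu*theta (k+1)) * (z^(k+1) / gammaD mu (k+1))
        = z * (z^k / gammaD mu k) := f1_succ mu hmu z k
    have hm : ((k:ℝ)+1) + 2*mu*theta (k+1) = ((k:ℝ) + 2*mu*theta k) + 1 + 2*mu - 4*mu*theta k := by
      rw [theta_succ]; ring
    push_cast
    calc ((k:ℝ)+1 + 2*mu*theta (k+1))^2 * (z^(k+1) / gammaD mu (k+1))
        = (((k:ℝ)+1) + 2*mu*theta (k+1)) * ((((k:ℝ)+1) + 2*mu*theta (k+1)) * (z^(k+1) / gammaD mu (k+1))) := by ring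
      _ = (((k:ℝ)+1) + 2*mu*theta (k+1)) * (z * (z^k / gammaD mu k)) := by rw [key]
      _ = _ := by rw [hm]; ring

lemma integral_eval (n b a x L : ℝ) (hn : 0 < n) (hnb : 0 < n + b) :
    ∫ t in (L/n)..((L+1)/n), ((n*t + a)/(n+b) - x)^2
      = (1/(n*(n+b)^2)) * ((L + a - (n+b)*x)^2 + (L + a - (n+b)*x) + 1/3) := by
  have hn' : n ≠ 0 := ne_of_gt hn
  have hnb' : n + b ≠ 0 := ne_of_gt hnb
  have key : ∀ t : ℝ, HasDerivAt (fun t => (n+b)/(3*n) * ((n*t + a)/(n+b) - x)^3)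
      (((n*t+a)/(n+b) - x)^2) t := by
    intro t
    have h1 : HasDerivAt (fun t : ℝ => (n*t + a)/(n+b) - x) (n/(n+b)) t := by
      simpa using ((((hasDerivAt_id t).const_mul n).add_const a).div_const (n+b)).sub_const x
    have h2 : HasDerivAt (fun t => (n+b)/(3*n) * ((n*t + a)/(n+b) - x)^3)
        ((n+b)/(3*n) * (((3:ℕ):ℝ) * ((n*t+a)/(n+b) - x)^2 * (n/(n+b)))) t :=
      (h1.pow 3).const_mul ((n+b)/(3*n))
    convert h2 using 1
    field_simp
    ring
  rw [intervalIntegral.integral_eq_sub_of_hasDerivAt (fun t _ => key t)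
    ((Continuous.pow (by continuity) 2).intervalIntegrable _ _)]
  field_simp
  ring

lemma eD_pos (mu : ℝ) (hmu : 0 ≤ mu) (z : ℝ) (hz : 0 ≤ z) : 0 < eD mu z := by
  have hb := summable_base mu hmu z
  have h1 : (1:ℝ) = z^0 / gammaD mu 0 := by rw [gammaD_zero mu hmu]; simp
  have h2 : z^0 / gammaD mu 0 ≤ eD mu z := by
    apply Summable.le_tsum hb 0
    intro j _
    exact div_nonneg (pow_nonneg hz j) (le_of_lt (gammaD_pos mu hmu j))
  linarith [h1 ▸ h2]

theorem KnStar_central_second (mu a b : ℝ) (hmu : 0 ≤ mu) (ha : 0 ≤ a) (hab : a ≤ b)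
    (n : ℕ) (hn : 0 < n) (x : ℝ) (hx : 1 / 2 ≤ x) :
    KnStar mu a b n (fun t => (t - x) ^ 2) x
      = (1 / (n + b) ^ 2)
          * (b ^ 2 * x ^ 2
            + (n - 2 * a * b + 2 * n * mu * eD mu (-(n * rn n x)) / eD mu (n * rn n x)) * x
            + a ^ 2 - (5 / 12 + mu * eD mu (-(n * rn n x)) / eD mu (n * rn n x))) := by
  have hN : (0:ℝ) < (n:ℝ) := by exact_mod_cast hn
  have hN1 : (1:ℝ) ≤ (n:ℝ) := by exact_mod_cast hn
  have hnb : (0:ℝ) < (n:ℝ) + b := by linarith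
  set z : ℝ := (n:ℝ) * rn n x with hz_def
  have hzval : z = (n:ℝ) * x - 1/2 := by
    rw [hz_def, rn]
    field_simp
  have hz : 0 ≤ z := by rw [hzval]; nlinarith
  have hE : 0 < eD mu z := eD_pos mu hmu z hz
  set c : ℝ := a - ((n:ℝ)+b)*x with hc_def
  have hb := summable_base mu hmu z
  have h1 := sum1 mu hmu z
  have h2 := sum2 mu hmu z
  -- rewrite each term of the series
  have hterm : ∀ k : ℕ,
      z ^ k / gammaD mu k *
        ∫ t in (((k : ℝ) + 2 * mu * theta k) / n)..(((k : ℝ) + 1 + 2 * mu * theta k) / n),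
          (((n:ℝ) * t + a) / ((n:ℝ) + b) - x) ^ 2
      = (1/((n:ℝ)*((n:ℝ)+b)^2)) * ( ((k:ℝ) + 2*mu*theta k)^2 * (z^k / gammaD mu k)
          + (2*c+1) * (((k:ℝ) + 2*mu*theta k) * (z^k / gammaD mu k))
          + (c^2 + c + 1/3) * (z^k / gammaD mu k) ) := by
    intro k
    have hup : ((k : ℝ) + 1 + 2 * mu * theta k) / n
        = (((k : ℝ) + 2 * mu * theta k) + 1) / n := by ring_nf
    rw [hup, integral_eval (n:ℝ) b a x ((k:ℝ) + 2*mu*theta k) hN hnb]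
    rw [hc_def]
    ring
  -- sum the series
  have hsum :
      (∑' k : ℕ, z ^ k / gammaD mu k *
        ∫ t in (((k : ℝ) + 2 * mu * theta k) / n)..(((k : ℝ) + 1 + 2 * mu * theta k) / n),
          (((n:ℝ) * t + a) / ((n:ℝ) + b) - x) ^ 2)
      = (1/((n:ℝ)*((n:ℝ)+b)^2)) * (
          (z^2 * eD mu z + (1+2*mu) * (z * eD mu z) - 4*mu*z*((eD mu z - eD mu (-z))/2))
          + (2*c+1) * (z * eD mu z)
          + (c^2 + c + 1/3) * eD mu z ) := by
    rw [tsum_congr hterm, tsum_mul_left,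
      Summable.tsum_add (h2.1.add (h1.1.mul_left (2*c+1))) (hb.mul_left (c^2+c+1/3)),
      Summable.tsum_add h2.1 (h1.1.mul_left (2*c+1)), tsum_mul_left, tsum_mul_left,
      h1.2, h2.2]
    have : (∑' k : ℕ, z ^ k / gammaD mu k) = eD mu z := rfl
    rw [this]
  rw [KnStar]
  rw [show ((n:ℝ) * rn n x) = z from rfl]
  rw [hsum]
  have hnbne : (n:ℝ) + b ≠ 0 := ne_of_gt hnb
  have hNne : (n:ℝ) ≠ 0 := ne_of_gt hN
  rw [hc_def]
  generalize eD mu (-z) = E'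
  generalize hEe : eD mu z = E at hE ⊢
  have hEne : E ≠ 0 := ne_of_gt hE
  rw [hzval]
  field_simp
  ring
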